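/- The finite-horizon Q-learning iterates are stable: almost surely, sup_{m≥0} ‖Q^m‖ < ∞, where ‖·‖ is the sup norm over all components (n,i,a). -/

import Mathlib

open Finset MeasureTheory ProbabilityTheory Filter

noncomputable section

/-- The finite-horizon Q-learning iterates `Q^m_n(i,a)(ω)`.
`Qiter N g gN step η Q0 m n i a ω = Q^m_n(i,a)(ω)`, defined by
`Q^0 = Q0` and, for `n < N`,
`Q^{m+1}_n(i,a) = Q^m_n(i,a) + a(m)(g_n(i,a,η_n^m(i,a)) + min_b Q^m_{n+1}(η_n^m(i,a),b) − Q^m_n(i,a))`,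
with `Q^{m+1}_N(i,a) = g_N(i)`. -/
def Qiter {S A Ω : Type*} [Fintype A] [Nonempty A] (N : ℕ)
    (g : ℕ → S → A → S → ℝ) (gN : S → ℝ) (step : ℕ → ℝ)
    (η : ℕ → Fin N → S → A → Ω → S) (Q0 : ℕ → S → A → ℝ) :
    ℕ → ℕ → S → A → Ω → ℝ
  | 0, n, i, a, _ => Q0 n i a
  | m + 1, n, i, a, ω =>
      if h : n < N then
        Qiter N g gN step η Q0 m n i a ω +
          step m * (g n i a (η m ⟨n, h⟩ i a ω) +
            (⨅ b : A, Qiter N g gN step η Q0 m (n + 1) (η m ⟨n, h⟩ i a ω) b ω) -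
            Qiter N g gN step η Q0 m n i a ω)
      else gN i

/-- The Q-learning noise `M^{m+1}_n(i,a)(ω)` (with `Mnoise … m` denoting `M^{m+1}`):
for `n < N` it equals
`g_n(i,a,η_n^m(i,a)) + min_b Q^m_{n+1}(η_n^m(i,a),b)
  − Σ_j p_n(i,a,j)(g_n(i,a,j) + min_b Q^m_{n+1}(j,b))`,
and it vanishes for `n = N`. -/
def Mnoise {S A Ω : Type*} [Fintype S] [Fintype A] [Nonempty A] (N : ℕ)
    (p g : ℕ → S → A → S → ℝ) (gN : S → ℝ) (step : ℕ → ℝ)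
    (η : ℕ → Fin N → S → A → Ω → S) (Q0 : ℕ → S → A → ℝ)
    (m n : ℕ) (i : S) (a : A) (ω : Ω) : ℝ :=
  if h : n < N then
    g n i a (η m ⟨n, h⟩ i a ω) +
      (⨅ b : A, Qiter N g gN step η Q0 m (n + 1) (η m ⟨n, h⟩ i a ω) b ω) -
      ∑ j, p n i a j * (g n i a j + ⨅ b : A, Qiter N g gN step η Q0 m (n + 1) j b ω)
  else 0

/-- The σ-algebra `F_m` generated by the samples `η_{n'}^l(i',a')` for `l < m`. -/
def filt {S A Ω : Type*} [MeasurableSpace S] (N : ℕ)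
    (η : ℕ → Fin N → S → A → Ω → S) (m : ℕ) : MeasurableSpace Ω :=
  ⨆ (l : ℕ) (_ : l < m) (n : Fin N) (i : S) (a : A),
    MeasurableSpace.comap (η l n i a) inferInstance



private lemma abs_ciInf_le' {A : Type*} [Fintype A] [Nonempty A] (f : A → ℝ) (B : ℝ)
    (h : ∀ b, |f b| ≤ B) : |⨅ b, f b| ≤ B := by
  rw [abs_le]
  refine ⟨le_ciInf fun b => (abs_le.1 (h b)).1, ?_⟩
  exact le_trans (ciInf_le (Set.finite_range f).bddBelow (Classical.arbitrary A))
      (abs_le.1 (h (Classical.arbitrary A))).2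

private lemma convex_abs_bound' (s q x M : ℝ) (hs0 : 0 ≤ s) (hs1 : s ≤ 1)
    (hq : |q| ≤ M) (hx : |x| ≤ M) : |q + s * (x - q)| ≤ M := by
  have h1 : q + s*(x-q) = (1-s)*q + s*x := by ring
  rw [h1]
  calc |(1-s)*q + s*x| ≤ |(1-s)*q| + |s*x| := abs_add_le _ _
    _ = (1-s)*|q| + s*|x| := by
        rw [abs_mul, abs_mul, abs_of_nonneg (by linarith : (0:ℝ) ≤ 1 - s), abs_of_nonneg hs0]
    _ ≤ (1-s)*M + s*M := by nlinarith [abs_nonneg q, abs_nonneg x]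
    _ = M := by ring

private lemma Qiter_terminal' {S A Ω : Type*} [Fintype A] [Nonempty A] (N : ℕ)
    (g : ℕ → S → A → S → ℝ) (gN : S → ℝ) (step : ℕ → ℝ)
    (η : ℕ → Fin N → S → A → Ω → S) (Q0 : ℕ → S → A → ℝ)
    (hQ0N : ∀ i a, Q0 N i a = gN i) :
    ∀ (m : ℕ) (i : S) (a : A) (ω : Ω), Qiter N g gN step η Q0 m N i a ω = gN i
  | 0, i, a, _ => hQ0N i a
  | m+1, i, a, ω => by simp [Qiter]

private lemma level_bound' {S A Ω : Type*} [Fintype S] [Nonempty S] [Fintype A] [Nonempty A]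
    (N : ℕ) (g : ℕ → S → A → S → ℝ) (gN : S → ℝ) (step : ℕ → ℝ)
    (hstep : ∀ m, 0 < step m) (m0 : ℕ) (hm0 : ∀ m ≥ m0, step m ≤ 1)
    (η : ℕ → Fin N → S → A → Ω → S) (Q0 : ℕ → S → A → ℝ)
    (n : ℕ) (hn : n < N) (B1 : ℝ)
    (hB1 : ∀ (m : ℕ) (j : S) (b : A) (ω : Ω),
      |Qiter N g gN step η Q0 m (n+1) j b ω| ≤ B1) :
    ∃ B, ∀ (m : ℕ) (i : S) (a : A) (ω : Ω),
      |Qiter N g gN step η Q0 m n i a ω| ≤ B := by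
  obtain ⟨G, hG⟩ := Finite.exists_le (fun x : S × A × S => |g n x.1 x.2.1 x.2.2|)
  obtain ⟨C0, hC0⟩ := Finite.exists_le (fun x : S × A => |Q0 n x.1 x.2|)
  set D : ℝ := max G 0 + max B1 0 with hD
  have hDnn : 0 ≤ D := by positivity
  have hC0nn : 0 ≤ C0 :=
    le_trans (abs_nonneg _) (hC0 (Classical.arbitrary S, Classical.arbitrary A))
  have hX : ∀ (m : ℕ) (i : S) (a : A) (ω : Ω),
      |g n i a (η m ⟨n, hn⟩ i a ω) +
        (⨅ b : A, Qiter N g gN step η Q0 m (n + 1) (η m ⟨n, hn⟩ i a ω) b ω)| ≤ D := by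
    intro m i a ω
    refine le_trans (abs_add_le _ _) (add_le_add ?_ ?_)
    · exact le_trans (hG (i, a, _)) (le_max_left _ _)
    · exact abs_ciInf_le' _ _ (fun b => le_trans (hB1 m _ b ω) (le_max_left _ _))
  set c : ℕ → ℝ := fun m => Nat.rec C0 (fun m cm => cm + step m * (D + cm)) m with hc
  have hcs : ∀ m, c (m+1) = c m + step m * (D + c m) := fun m => rfl
  have hcnn : ∀ m, 0 ≤ c m := by
    intro m
    induction m with
    | zero => exact hC0nn
    | succ m ih =>
      rw [hcs]
      have := (hstep m).le
      nlinarith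
  have hcmono : Monotone c := by
    refine monotone_nat_of_le_succ (fun m => ?_)
    rw [hcs]
    nlinarith [hcnn m, (hstep m).le, hDnn]
  have hcb : ∀ (m : ℕ) (i : S) (a : A) (ω : Ω),
      |Qiter N g gN step η Q0 m n i a ω| ≤ c m := by
    intro m
    induction m with
    | zero => intro i a ω; exact hC0 (i, a)
    | succ m ih =>
      intro i a ω
      rw [Qiter, dif_pos hn]
      have hq := ih i a ω
      have hx := hX m i a ω
      rw [hcs]
      set q := Qiter N g gN step η Q0 m n i a ω
      set x := g n i a (η m ⟨n, hn⟩ i a ω) +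
        (⨅ b : A, Qiter N g gN step η Q0 m (n + 1) (η m ⟨n, hn⟩ i a ω) b ω)
      calc |q + step m * (x - q)| ≤ |q| + step m * (|x| + |q|) := by
            have h2 : |step m * (x - q)| ≤ step m * (|x| + |q|) := by
              rw [abs_mul, abs_of_pos (hstep m)]
              exact mul_le_mul_of_nonneg_left (abs_sub _ _) (hstep m).le
            calc |q + step m * (x-q)| ≤ |q| + |step m * (x-q)| := abs_add_le _ _
              _ ≤ |q| + step m * (|x| + |q|) := by linarith
        _ ≤ c m + step m * (D + c m) := by
            have := (hstep m).le
            nlinarith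
  set M : ℝ := max (c m0) D with hM
  have htail : ∀ (k : ℕ) (i : S) (a : A) (ω : Ω),
      |Qiter N g gN step η Q0 (m0 + k) n i a ω| ≤ M := by
    intro k
    induction k with
    | zero => intro i a ω; exact le_trans (hcb m0 i a ω) (le_max_left _ _)
    | succ k ih =>
      intro i a ω
      have heq : m0 + (k+1) = (m0 + k) + 1 := rfl
      rw [heq, Qiter, dif_pos hn]
      exact convex_abs_bound' _ _ _ _ (hstep _).le (hm0 _ (Nat.le_add_right _ _))
        (ih i a ω) (le_trans (hX _ i a ω) (le_max_right _ _))
  refine ⟨M, fun m i a ω => ?_⟩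
  rcases le_or_gt m m0 with h | h
  · exact le_trans (hcb m i a ω) (le_trans (hcmono h) (le_max_left _ _))
  · obtain ⟨k, rfl⟩ := Nat.exists_eq_add_of_le h.le
    exact htail k i a ω

/-- the finite-horizon Q-learning iterates are stable: almost surely,
`sup_m ‖Q^m‖ < ∞` (the sup norm being over all components `(n,i,a)`). -/
theorem q_learning_iterates_stable
    {S A Ω : Type*} [Fintype S] [Nonempty S] [MeasurableSpace S]
    [MeasurableSingletonClass S] [Fintype A] [Nonempty A] [MeasurableSpace Ω]
    (N : ℕ) (hN : 1 ≤ N)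
    (p g : ℕ → S → A → S → ℝ) (gN : S → ℝ)
    (hp0 : ∀ n < N, ∀ i a j, 0 ≤ p n i a j)
    (hp1 : ∀ n < N, ∀ i a, ∑ j, p n i a j = 1)
    (P : Measure Ω) [IsProbabilityMeasure P]
    (η : ℕ → Fin N → S → A → Ω → S)
    (hmeas : ∀ m n i a, Measurable (η m n i a))
    (hdist : ∀ (m : ℕ) (n : Fin N) (i : S) (a : A) (j : S),
      P {ω | η m n i a ω = j} = ENNReal.ofReal (p n i a j))
    (hindep : iIndepFun
      (fun x : ℕ × Fin N × S × A => η x.1 x.2.1 x.2.2.1 x.2.2.2) P)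
    (step : ℕ → ℝ) (hstep : ∀ m, 0 < step m)
    (hstep_sum : Tendsto (fun M => ∑ m ∈ Finset.range M, step m) atTop atTop)
    (hstep_sq : Summable (fun m => (step m) ^ 2))
    (Q0 : ℕ → S → A → ℝ) (hQ0N : ∀ i a, Q0 N i a = gN i) :
    ∀ᵐ ω ∂P, ∃ C : ℝ, ∀ m n : ℕ, n ≤ N → ∀ (i : S) (a : A),
      |Qiter N g gN step η Q0 m n i a ω| ≤ C := by
  obtain ⟨m0, hm0⟩ : ∃ m0, ∀ m ≥ m0, step m ≤ 1 := by
    have h0 : Tendsto (fun m => step m ^ 2) atTop (nhds 0) := hstep_sq.tendsto_atTop_zero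
    have h1 : ∀ᶠ m in atTop, step m ^ 2 ≤ 1 :=
      h0.eventually (eventually_le_nhds (by norm_num))
    have h2 : ∀ᶠ m in atTop, step m ≤ 1 := by
      filter_upwards [h1] with m hm
      nlinarith [hstep m]
    exact eventually_atTop.1 h2
  have key : ∀ k : ℕ, k ≤ N → ∃ B, ∀ (m : ℕ) (i : S) (a : A) (ω : Ω),
      |Qiter N g gN step η Q0 m (N - k) i a ω| ≤ B := by
    intro k
    induction k with
    | zero =>
      intro _
      obtain ⟨BN, hBN⟩ := Finite.exists_le (fun i : S => |gN i|)
      refine ⟨BN, fun m i a ω => ?_⟩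
      rw [Nat.sub_zero, Qiter_terminal' N g gN step η Q0 hQ0N m i a ω]
      exact hBN i
    | succ k ih =>
      intro hk
      obtain ⟨B1, hB1⟩ := ih (Nat.le_of_succ_le hk)
      have hn : N - (k+1) < N := by omega
      have heq : N - (k+1) + 1 = N - k := by omega
      exact level_bound' N g gN step hstep m0 hm0 η Q0 (N-(k+1)) hn B1
        (by rw [heq]; exact hB1)
  have key2 : ∀ n : Fin (N+1), ∃ B, ∀ (m : ℕ) (i : S) (a : A) (ω : Ω),
      |Qiter N g gN step η Q0 m (n : ℕ) i a ω| ≤ B := by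
    intro n
    have hle : (n : ℕ) ≤ N := by omega
    have h1 : (n : ℕ) = N - (N - (n : ℕ)) := by omega
    obtain ⟨B, hB⟩ := key (N - (n : ℕ)) (Nat.sub_le _ _)
    refine ⟨B, fun m i a ω => ?_⟩
    rw [h1]
    exact hB m i a ω
  choose Bf hBf using key2
  obtain ⟨C, hC⟩ := Finite.exists_le Bf
  refine Eventually.of_forall (fun ω => ⟨C, fun m n hn i a => ?_⟩)
  have h := hBf ⟨n, by omega⟩ m i a ω
  exact le_trans h (hC _)


end
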